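/- Fix p ≥ 1 and define, for indices i ∈ {1, …, 2p+1}, vectors v_i ∈ ℤ² by: v₁ = (−2p, 2p); for even i = 2j (1 ≤ j ≤ p), v_{2j} = (−2(p−j), 2p); for odd i = 2j+1 (1 ≤ j ≤ p), v_{2j+1} = (−2(p−j) − 3, 2p+2). Then the number of unordered pairs of disjoint 2-element subsets {{a,b}, {c,d}} of {1,…,2p+1} (with a,b,c,d pairwise distinct) satisfying v_a + v_b = v_c + v_d equals p²(p−1)/2. -/

import Mathlib

open Finset

/-- The (q-degree, a-degree) vectors of the `2p+1` generators of the uncolored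
HOMFLY-PT homology of the `(2, 2p+1)` torus knot: `v₁ = (-2p, 2p)`,
`v_{2j} = (-2(p-j), 2p)`, `v_{2j+1} = (-2(p-j) - 3, 2p+2)` for `1 ≤ j ≤ p`. -/
def torusVec (p : ℕ) (i : ℕ) : ℤ × ℤ :=
  if i = 1 then (-(2 * (p : ℤ)), 2 * (p : ℤ))
  else if i % 2 = 0 then (-(2 * ((p : ℤ) - ((i / 2 : ℕ) : ℤ))), 2 * (p : ℤ))
  else (-(2 * ((p : ℤ) - ((i / 2 : ℕ) : ℤ))) - 3, 2 * (p : ℤ) + 2)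

namespace Stmt9
def iA (p k : ℕ) : ℕ := if k = p then 1 else 2*(p-k)
def iB (p l : ℕ) : ℕ := 2*(p-l)+1

lemma vA {p k : ℕ} (hk : k ≤ p) : torusVec p (iA p k) = (-(2*(k:ℤ)), 2*(p:ℤ)) := by
  unfold iA
  split_ifs with h
  · subst h; simp [torusVec]
  · have hk' : k < p := lt_of_le_of_ne hk h
    have h1 : 2*(p-k) ≠ 1 := by omega
    have h2 : 2*(p-k) % 2 = 0 := by omega
    have h3 : 2*(p-k)/2 = p - k := by omega
    rw [torusVec, if_neg h1, if_pos h2, h3]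
    have : ((p - k : ℕ) : ℤ) = (p:ℤ) - (k:ℤ) := by omega
    rw [this, Prod.mk.injEq]
    constructor <;> ring

lemma vB {p l : ℕ} (hl : l < p) : torusVec p (iB p l) = (-(2*(l:ℤ)) - 3, 2*(p:ℤ) + 2) := by
  unfold iB
  have h1 : 2*(p-l)+1 ≠ 1 := by omega
  have h2 : ¬ (2*(p-l)+1) % 2 = 0 := by omega
  have h3 : (2*(p-l)+1)/2 = p - l := by omega
  rw [torusVec, if_neg h1, if_neg h2, h3]
  have : ((p - l : ℕ) : ℤ) = (p:ℤ) - (l:ℤ) := by omega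
  rw [this, Prod.mk.injEq]
  constructor <;> ring

lemma iA_mem {p k : ℕ} (hk : k ≤ p) : iA p k ∈ Finset.Icc 1 (2*p+1) := by
  unfold iA; split_ifs <;> simp [Finset.mem_Icc] <;> omega

lemma iB_mem {p l : ℕ} (hl : l < p) : iB p l ∈ Finset.Icc 1 (2*p+1) := by
  unfold iB; simp only [Finset.mem_Icc]; omega

lemma iA_inj {p k k' : ℕ} (hk : k ≤ p) (hk' : k' ≤ p) (h : iA p k = iA p k') : k = k' := by
  unfold iA at h; split_ifs at h <;> omega

lemma iB_inj {p l l' : ℕ} (hl : l < p) (hl' : l' < p) (h : iB p l = iB p l') : l = l' := by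
  simp only [iB] at h; omega

lemma iA_ne_iB {p k l : ℕ} (hl : l < p) : iA p k ≠ iB p l := by
  unfold iA iB; split_ifs <;> omega

lemma cover {p i : ℕ} (hi : i ∈ Finset.Icc 1 (2*p+1)) :
    (∃ k, k ≤ p ∧ iA p k = i) ∨ (∃ l, l < p ∧ iB p l = i) := by
  simp only [Finset.mem_Icc] at hi
  by_cases h1 : i = 1
  · exact Or.inl ⟨p, le_rfl, by simp [iA, h1]⟩
  by_cases h2 : i % 2 = 0
  · refine Or.inl ⟨p - i/2, by omega, ?_⟩
    unfold iA; rw [if_neg (by omega)]; omega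
  · refine Or.inr ⟨p - (i-1)/2, by omega, ?_⟩
    unfold iB; omega

lemma pair_eq {α : Type*} [DecidableEq α] {x y z w : α}
    (h : ({x,y} : Finset α) = {z,w}) :
    (x = z ∧ y = w) ∨ (x = w ∧ y = z) := by
  have hx : x = z ∨ x = w := by
    have : x ∈ ({z,w} : Finset α) := h ▸ (by simp : x ∈ ({x,y} : Finset α))
    simpa using this
  have hy : y = z ∨ y = w := by
    have : y ∈ ({z,w} : Finset α) := h ▸ (by simp : y ∈ ({x,y} : Finset α))
    simpa using this
  have hz : z = x ∨ z = y := by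
    have : z ∈ ({x,y} : Finset α) := h ▸ (by simp : z ∈ ({z,w} : Finset α))
    simpa using this
  have hw : w = x ∨ w = y := by
    have : w ∈ ({x,y} : Finset α) := h ▸ (by simp : w ∈ ({z,w} : Finset α))
    simpa using this
  rcases hx with rfl | rfl
  · rcases hy with rfl | rfl
    · rcases hw with rfl | rfl <;> tauto
    · tauto
  · rcases hy with rfl | rfl
    · tauto
    · rcases hz with rfl | rfl <;> tauto



def TAA (p : ℕ) : Finset (ℕ×ℕ×ℕ×ℕ) :=
  (range (p+1) ×ˢ range (p+1) ×ˢ range (p+1) ×ˢ range (p+1)).filter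
    (fun q => q.1 < q.2.2.1 ∧ q.2.2.1 < q.2.2.2 ∧ q.2.2.2 < q.2.1 ∧
      q.1 + q.2.1 = q.2.2.1 + q.2.2.2)

def TAB (p : ℕ) : Finset (ℕ×ℕ×ℕ×ℕ) :=
  (range (p+1) ×ˢ range p ×ˢ range (p+1) ×ˢ range p).filter
    (fun q => q.1 < q.2.2.1 ∧ q.1 + q.2.1 = q.2.2.1 + q.2.2.2)

abbrev Pairty := (ℕ×ℕ×ℕ×ℕ) ⊕ ((ℕ×ℕ×ℕ×ℕ) ⊕ (ℕ×ℕ×ℕ×ℕ))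

def F (p : ℕ) : Pairty → Finset (Finset ℕ)
  | .inl q => {{iA p q.1, iA p q.2.1}, {iA p q.2.2.1, iA p q.2.2.2}}
  | .inr (.inl q) => {{iB p q.1, iB p q.2.1}, {iB p q.2.2.1, iB p q.2.2.2}}
  | .inr (.inr q) => {{iA p q.1, iB p q.2.1}, {iA p q.2.2.1, iB p q.2.2.2}}

def D (p : ℕ) : Finset Pairty := (TAA p).disjSum ((TAA (p-1)).disjSum (TAB p))

def L (p : ℕ) : Finset (Finset (Finset ℕ)) :=
  (((Finset.Icc 1 (2*p+1)).powersetCard 2).powersetCard 2).filter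
    (fun u => ∃ e ∈ u, ∃ f ∈ u, e ≠ f ∧ Disjoint e f ∧
      ∑ i ∈ e, torusVec p i = ∑ i ∈ f, torusVec p i)

lemma mem_L_of {p a b c d : ℕ}
    (ha : a ∈ Finset.Icc 1 (2*p+1)) (hb : b ∈ Finset.Icc 1 (2*p+1))
    (hc : c ∈ Finset.Icc 1 (2*p+1)) (hd : d ∈ Finset.Icc 1 (2*p+1))
    (hab : a ≠ b) (hcd : c ≠ d) (hac : a ≠ c) (had : a ≠ d) (hbc : b ≠ c) (hbd : b ≠ d)
    (hsum : torusVec p a + torusVec p b = torusVec p c + torusVec p d) :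
    ({{a,b},{c,d}} : Finset (Finset ℕ)) ∈ L p := by
  have hsub1 : ({a,b} : Finset ℕ) ⊆ Finset.Icc 1 (2*p+1) := by
    intro x hx; simp only [Finset.mem_insert, Finset.mem_singleton] at hx
    rcases hx with rfl|rfl <;> assumption
  have hsub2 : ({c,d} : Finset ℕ) ⊆ Finset.Icc 1 (2*p+1) := by
    intro x hx; simp only [Finset.mem_insert, Finset.mem_singleton] at hx
    rcases hx with rfl|rfl <;> assumption
  have hne : ({a,b} : Finset ℕ) ≠ {c,d} := by
    intro h; rcases pair_eq h with ⟨h1,h2⟩|⟨h1,h2⟩ <;> tauto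
  refine Finset.mem_filter.2 ⟨Finset.mem_powersetCard.2 ⟨?_, ?_⟩, ?_⟩
  · intro x hx; simp only [Finset.mem_insert, Finset.mem_singleton] at hx
    rcases hx with rfl|rfl
    · exact Finset.mem_powersetCard.2 ⟨hsub1, Finset.card_pair hab⟩
    · exact Finset.mem_powersetCard.2 ⟨hsub2, Finset.card_pair hcd⟩
  · exact Finset.card_pair hne
  · refine ⟨{a,b}, by simp, {c,d}, by simp, hne, ?_, ?_⟩
    · rw [Finset.disjoint_left]
      intro x hx hx'
      simp only [Finset.mem_insert, Finset.mem_singleton] at hx hx'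
      rcases hx with rfl|rfl <;> rcases hx' with rfl|rfl <;> tauto
    · rw [Finset.sum_pair hab, Finset.sum_pair hcd]; exact hsum

lemma F_maps {p : ℕ} (hp : 1 ≤ p) : ∀ x ∈ D p, F p x ∈ L p := by
  intro x hx
  rcases x with ⟨k1,k2,k3,k4⟩ | ⟨l1,l2,l3,l4⟩ | ⟨k1,l1,k2,l2⟩
  · rw [D, Finset.inl_mem_disjSum] at hx
    simp only [TAA, mem_filter, mem_product, mem_range] at hx
    obtain ⟨⟨h1,h2,h3,h4⟩,ho1,ho2,ho3,hs⟩ := hx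
    show ({{iA p k1, iA p k2}, {iA p k3, iA p k4}} : Finset (Finset ℕ)) ∈ L p
    refine mem_L_of (iA_mem (by omega)) (iA_mem (by omega)) (iA_mem (by omega))
      (iA_mem (by omega)) ?_ ?_ ?_ ?_ ?_ ?_ ?_
    · exact fun h => by have := iA_inj (by omega) (by omega) h; omega
    · exact fun h => by have := iA_inj (by omega) (by omega) h; omega
    · exact fun h => by have := iA_inj (by omega) (by omega) h; omega
    · exact fun h => by have := iA_inj (by omega) (by omega) h; omega
    · exact fun h => by have := iA_inj (by omega) (by omega) h; omega
    · exact fun h => by have := iA_inj (by omega) (by omega) h; omega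
    · rw [vA (by omega), vA (by omega), vA (by omega), vA (by omega)]
      simp only [Prod.mk_add_mk, Prod.mk.injEq]
      exact ⟨by omega, trivial⟩
  · rw [D, Finset.inr_mem_disjSum, Finset.inl_mem_disjSum] at hx
    simp only [TAA, mem_filter, mem_product, mem_range] at hx
    obtain ⟨⟨h1,h2,h3,h4⟩,ho1,ho2,ho3,hs⟩ := hx
    show ({{iB p l1, iB p l2}, {iB p l3, iB p l4}} : Finset (Finset ℕ)) ∈ L p
    refine mem_L_of (iB_mem (by omega)) (iB_mem (by omega)) (iB_mem (by omega))
      (iB_mem (by omega)) ?_ ?_ ?_ ?_ ?_ ?_ ?_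
    · exact fun h => by have := iB_inj (by omega) (by omega) h; omega
    · exact fun h => by have := iB_inj (by omega) (by omega) h; omega
    · exact fun h => by have := iB_inj (by omega) (by omega) h; omega
    · exact fun h => by have := iB_inj (by omega) (by omega) h; omega
    · exact fun h => by have := iB_inj (by omega) (by omega) h; omega
    · exact fun h => by have := iB_inj (by omega) (by omega) h; omega
    · rw [vB (by omega), vB (by omega), vB (by omega), vB (by omega)]
      simp only [Prod.mk_add_mk, Prod.mk.injEq]
      exact ⟨by omega, trivial⟩
  · rw [D, Finset.inr_mem_disjSum, Finset.inr_mem_disjSum] at hx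
    simp only [TAB, mem_filter, mem_product, mem_range] at hx
    obtain ⟨⟨h1,h2,h3,h4⟩,ho1,hs⟩ := hx
    show ({{iA p k1, iB p l1}, {iA p k2, iB p l2}} : Finset (Finset ℕ)) ∈ L p
    refine mem_L_of (iA_mem (by omega)) (iB_mem (by omega)) (iA_mem (by omega))
      (iB_mem (by omega)) (iA_ne_iB (by omega)) (iA_ne_iB (by omega)) ?_
      (iA_ne_iB (by omega)) ?_ ?_ ?_
    · exact fun h => by have := iA_inj (by omega) (by omega) h; omega
    · exact fun h => (iA_ne_iB (l := l1) (by omega) h.symm)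
    · exact fun h => by have := iB_inj (by omega) (by omega) h; omega
    · rw [vA (by omega), vB (by omega), vA (by omega), vB (by omega)]
      simp only [Prod.mk_add_mk, Prod.mk.injEq]
      exact ⟨by omega, trivial⟩

lemma F_inj {p : ℕ} (hp : 1 ≤ p) :
    ∀ x ∈ D p, ∀ y ∈ D p, F p x = F p y → x = y := by
  intro x hx y hy h
  rcases x with ⟨a1,a2,a3,a4⟩ | ⟨a1,a2,a3,a4⟩ | ⟨a1,a2,a3,a4⟩ <;>
    rcases y with ⟨b1,b2,b3,b4⟩ | ⟨b1,b2,b3,b4⟩ | ⟨b1,b2,b3,b4⟩ <;>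
    simp only [D, Finset.inl_mem_disjSum, Finset.inr_mem_disjSum, TAA, TAB,
      mem_filter, mem_product, mem_range] at hx hy
  -- AA AA
  · obtain ⟨⟨m1,m2,m3,m4⟩,o1,o2,o3,os⟩ := hx
    obtain ⟨⟨n1,n2,n3,n4⟩,q1,q2,q3,qs⟩ := hy
    replace h : ({{iA p a1, iA p a2}, {iA p a3, iA p a4}} : Finset (Finset ℕ))
        = {{iA p b1, iA p b2}, {iA p b3, iA p b4}} := h
    rcases pair_eq h with ⟨hA,hB⟩|⟨hA,hB⟩ <;>
      rcases pair_eq hA with ⟨e1,e2⟩|⟨e1,e2⟩ <;>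
      rcases pair_eq hB with ⟨e3,e4⟩|⟨e3,e4⟩ <;>
      (have t1 := iA_inj (by omega) (by omega) e1;
       have t2 := iA_inj (by omega) (by omega) e2;
       have t3 := iA_inj (by omega) (by omega) e3;
       have t4 := iA_inj (by omega) (by omega) e4;
       simp only [Sum.inl.injEq, Prod.mk.injEq]; omega)
  -- AA BB
  · obtain ⟨⟨m1,m2,m3,m4⟩,o1,o2,o3,os⟩ := hx
    obtain ⟨⟨n1,n2,n3,n4⟩,q1,q2,q3,qs⟩ := hy
    replace h : ({{iA p a1, iA p a2}, {iA p a3, iA p a4}} : Finset (Finset ℕ))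
        = {{iB p b1, iB p b2}, {iB p b3, iB p b4}} := h
    rcases pair_eq h with ⟨hA,hB⟩|⟨hA,hB⟩ <;>
      rcases pair_eq hA with ⟨e1,e2⟩|⟨e1,e2⟩ <;>
      exact absurd e1 (iA_ne_iB (by omega))
  -- AA AB
  · obtain ⟨⟨m1,m2,m3,m4⟩,o1,o2,o3,os⟩ := hx
    obtain ⟨⟨n1,n2,n3,n4⟩,q1,qs⟩ := hy
    replace h : ({{iA p a1, iA p a2}, {iA p a3, iA p a4}} : Finset (Finset ℕ))
        = {{iA p b1, iB p b2}, {iA p b3, iB p b4}} := h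
    rcases pair_eq h with ⟨hA,hB⟩|⟨hA,hB⟩ <;>
      rcases pair_eq hA with ⟨e1,e2⟩|⟨e1,e2⟩
    · exact absurd e2 (iA_ne_iB (by omega))
    · exact absurd e1 (iA_ne_iB (by omega))
    · exact absurd e2 (iA_ne_iB (by omega))
    · exact absurd e1 (iA_ne_iB (by omega))
  -- BB AA
  · obtain ⟨⟨m1,m2,m3,m4⟩,o1,o2,o3,os⟩ := hx
    obtain ⟨⟨n1,n2,n3,n4⟩,q1,q2,q3,qs⟩ := hy
    replace h : ({{iB p a1, iB p a2}, {iB p a3, iB p a4}} : Finset (Finset ℕ))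
        = {{iA p b1, iA p b2}, {iA p b3, iA p b4}} := h
    rcases pair_eq h with ⟨hA,hB⟩|⟨hA,hB⟩ <;>
      rcases pair_eq hA with ⟨e1,e2⟩|⟨e1,e2⟩ <;>
      exact absurd e1.symm (iA_ne_iB (by omega))
  -- BB BB
  · obtain ⟨⟨m1,m2,m3,m4⟩,o1,o2,o3,os⟩ := hx
    obtain ⟨⟨n1,n2,n3,n4⟩,q1,q2,q3,qs⟩ := hy
    replace h : ({{iB p a1, iB p a2}, {iB p a3, iB p a4}} : Finset (Finset ℕ))
        = {{iB p b1, iB p b2}, {iB p b3, iB p b4}} := h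
    rcases pair_eq h with ⟨hA,hB⟩|⟨hA,hB⟩ <;>
      rcases pair_eq hA with ⟨e1,e2⟩|⟨e1,e2⟩ <;>
      rcases pair_eq hB with ⟨e3,e4⟩|⟨e3,e4⟩ <;>
      (have t1 := iB_inj (by omega) (by omega) e1;
       have t2 := iB_inj (by omega) (by omega) e2;
       have t3 := iB_inj (by omega) (by omega) e3;
       have t4 := iB_inj (by omega) (by omega) e4;
       simp only [Sum.inr.injEq, Sum.inl.injEq, Prod.mk.injEq]; omega)
  -- BB AB
  · obtain ⟨⟨m1,m2,m3,m4⟩,o1,o2,o3,os⟩ := hx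
    obtain ⟨⟨n1,n2,n3,n4⟩,q1,qs⟩ := hy
    replace h : ({{iB p a1, iB p a2}, {iB p a3, iB p a4}} : Finset (Finset ℕ))
        = {{iA p b1, iB p b2}, {iA p b3, iB p b4}} := h
    rcases pair_eq h with ⟨hA,hB⟩|⟨hA,hB⟩ <;>
      rcases pair_eq hA with ⟨e1,e2⟩|⟨e1,e2⟩
    · exact absurd e1.symm (iA_ne_iB (by omega))
    · exact absurd e2.symm (iA_ne_iB (by omega))
    · exact absurd e1.symm (iA_ne_iB (by omega))
    · exact absurd e2.symm (iA_ne_iB (by omega))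
  -- AB AA
  · obtain ⟨⟨m1,m2,m3,m4⟩,o1,os⟩ := hx
    obtain ⟨⟨n1,n2,n3,n4⟩,q1,q2,q3,qs⟩ := hy
    replace h : ({{iA p a1, iB p a2}, {iA p a3, iB p a4}} : Finset (Finset ℕ))
        = {{iA p b1, iA p b2}, {iA p b3, iA p b4}} := h
    rcases pair_eq h with ⟨hA,hB⟩|⟨hA,hB⟩ <;>
      rcases pair_eq hA with ⟨e1,e2⟩|⟨e1,e2⟩
    · exact absurd e2.symm (iA_ne_iB (by omega))
    · exact absurd e2.symm (iA_ne_iB (by omega))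
    · exact absurd e2.symm (iA_ne_iB (by omega))
    · exact absurd e2.symm (iA_ne_iB (by omega))
  -- AB BB
  · obtain ⟨⟨m1,m2,m3,m4⟩,o1,os⟩ := hx
    obtain ⟨⟨n1,n2,n3,n4⟩,q1,q2,q3,qs⟩ := hy
    replace h : ({{iA p a1, iB p a2}, {iA p a3, iB p a4}} : Finset (Finset ℕ))
        = {{iB p b1, iB p b2}, {iB p b3, iB p b4}} := h
    rcases pair_eq h with ⟨hA,hB⟩|⟨hA,hB⟩ <;>
      rcases pair_eq hA with ⟨e1,e2⟩|⟨e1,e2⟩ <;>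
      exact absurd e1 (iA_ne_iB (by omega))
  -- AB AB
  · obtain ⟨⟨m1,m2,m3,m4⟩,o1,os⟩ := hx
    obtain ⟨⟨n1,n2,n3,n4⟩,q1,qs⟩ := hy
    replace h : ({{iA p a1, iB p a2}, {iA p a3, iB p a4}} : Finset (Finset ℕ))
        = {{iA p b1, iB p b2}, {iA p b3, iB p b4}} := h
    rcases pair_eq h with ⟨hA,hB⟩|⟨hA,hB⟩ <;>
      rcases pair_eq hA with ⟨e1,e2⟩|⟨e1,e2⟩ <;>
      rcases pair_eq hB with ⟨e3,e4⟩|⟨e3,e4⟩ <;>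
      first
        | exact absurd e1 (iA_ne_iB (by omega))
        | exact absurd e3 (iA_ne_iB (by omega))
        | (have t1 := iA_inj (by omega) (by omega) e1;
           have t2 := iB_inj (by omega) (by omega) e2;
           have t3 := iA_inj (by omega) (by omega) e3;
           have t4 := iB_inj (by omega) (by omega) e4;
           simp only [Sum.inr.injEq, Prod.mk.injEq]; omega)

lemma surjAA {p ka kb kc kd : ℕ} (h1 : ka ≤ p) (h2 : kb ≤ p) (h3 : kc ≤ p) (h4 : kd ≤ p)
    (hab : ka ≠ kb) (hcd : kc ≠ kd) (d1 : ka ≠ kc) (d2 : ka ≠ kd) (d3 : kb ≠ kc) (d4 : kb ≠ kd)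
    (hs : ka + kb = kc + kd) :
    ∃ x ∈ D p, F p x = ({{iA p ka, iA p kb}, {iA p kc, iA p kd}} : Finset (Finset ℕ)) := by
  have hmem : ∀ w x y z : ℕ, w ≤ p → x ≤ p → y ≤ p → z ≤ p → w < y → y < z → z < x →
      w + x = y + z → Sum.inl (w,x,y,z) ∈ D p := by
    intro w x y z b1 b2 b3 b4 o1 o2 o3 ss
    rw [D, Finset.inl_mem_disjSum]
    simp only [TAA, mem_filter, mem_product, mem_range]
    omega
  rcases Nat.lt_or_ge ka kb with hab' | hab'
  · rcases Nat.lt_or_ge kc kd with hcd' | hcd'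
    · rcases Nat.lt_or_ge ka kc with h' | h'
      · exact ⟨Sum.inl (ka,kb,kc,kd), hmem _ _ _ _ h1 h2 h3 h4 (by omega) (by omega)
          (by omega) (by omega), rfl⟩
      · refine ⟨Sum.inl (kc,kd,ka,kb), hmem _ _ _ _ h3 h4 h1 h2 (by omega) (by omega)
          (by omega) (by omega), ?_⟩
        show ({{iA p kc, iA p kd}, {iA p ka, iA p kb}} : Finset (Finset ℕ)) = _
        rw [Finset.pair_comm]
    · rcases Nat.lt_or_ge ka kd with h' | h'
      · refine ⟨Sum.inl (ka,kb,kd,kc), hmem _ _ _ _ h1 h2 h4 h3 (by omega) (by omega)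
          (by omega) (by omega), ?_⟩
        show ({{iA p ka, iA p kb}, {iA p kd, iA p kc}} : Finset (Finset ℕ)) = _
        rw [Finset.pair_comm (iA p kd) (iA p kc)]
      · refine ⟨Sum.inl (kd,kc,ka,kb), hmem _ _ _ _ h4 h3 h1 h2 (by omega) (by omega)
          (by omega) (by omega), ?_⟩
        show ({{iA p kd, iA p kc}, {iA p ka, iA p kb}} : Finset (Finset ℕ)) = _
        rw [Finset.pair_comm (iA p kd) (iA p kc), Finset.pair_comm]
  · rcases Nat.lt_or_ge kc kd with hcd' | hcd'
    · rcases Nat.lt_or_ge kb kc with h' | h'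
      · refine ⟨Sum.inl (kb,ka,kc,kd), hmem _ _ _ _ h2 h1 h3 h4 (by omega) (by omega)
          (by omega) (by omega), ?_⟩
        show ({{iA p kb, iA p ka}, {iA p kc, iA p kd}} : Finset (Finset ℕ)) = _
        rw [Finset.pair_comm (iA p kb) (iA p ka)]
      · refine ⟨Sum.inl (kc,kd,kb,ka), hmem _ _ _ _ h3 h4 h2 h1 (by omega) (by omega)
          (by omega) (by omega), ?_⟩
        show ({{iA p kc, iA p kd}, {iA p kb, iA p ka}} : Finset (Finset ℕ)) = _
        rw [Finset.pair_comm (iA p kb) (iA p ka), Finset.pair_comm]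
    · rcases Nat.lt_or_ge kb kd with h' | h'
      · refine ⟨Sum.inl (kb,ka,kd,kc), hmem _ _ _ _ h2 h1 h4 h3 (by omega) (by omega)
          (by omega) (by omega), ?_⟩
        show ({{iA p kb, iA p ka}, {iA p kd, iA p kc}} : Finset (Finset ℕ)) = _
        rw [Finset.pair_comm (iA p kb) (iA p ka), Finset.pair_comm (iA p kd) (iA p kc)]
      · refine ⟨Sum.inl (kd,kc,kb,ka), hmem _ _ _ _ h4 h3 h2 h1 (by omega) (by omega)
          (by omega) (by omega), ?_⟩
        show ({{iA p kd, iA p kc}, {iA p kb, iA p ka}} : Finset (Finset ℕ)) = _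
        rw [Finset.pair_comm (iA p kb) (iA p ka), Finset.pair_comm (iA p kd) (iA p kc),
          Finset.pair_comm]

lemma surjBB {p : ℕ} (hp : 1 ≤ p) {ka kb kc kd : ℕ} (h1 : ka < p) (h2 : kb < p) (h3 : kc < p)
    (h4 : kd < p)
    (hab : ka ≠ kb) (hcd : kc ≠ kd) (d1 : ka ≠ kc) (d2 : ka ≠ kd) (d3 : kb ≠ kc) (d4 : kb ≠ kd)
    (hs : ka + kb = kc + kd) :
    ∃ x ∈ D p, F p x = ({{iB p ka, iB p kb}, {iB p kc, iB p kd}} : Finset (Finset ℕ)) := by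
  have hmem : ∀ w x y z : ℕ, w < p → x < p → y < p → z < p → w < y → y < z → z < x →
      w + x = y + z → Sum.inr (Sum.inl (w,x,y,z)) ∈ D p := by
    intro w x y z b1 b2 b3 b4 o1 o2 o3 ss
    rw [D, Finset.inr_mem_disjSum, Finset.inl_mem_disjSum]
    simp only [TAA, mem_filter, mem_product, mem_range]
    omega
  rcases Nat.lt_or_ge ka kb with hab' | hab'
  · rcases Nat.lt_or_ge kc kd with hcd' | hcd'
    · rcases Nat.lt_or_ge ka kc with h' | h'
      · exact ⟨Sum.inr (Sum.inl (ka,kb,kc,kd)), hmem _ _ _ _ h1 h2 h3 h4 (by omega) (by omega)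
          (by omega) (by omega), rfl⟩
      · refine ⟨Sum.inr (Sum.inl (kc,kd,ka,kb)), hmem _ _ _ _ h3 h4 h1 h2 (by omega) (by omega)
          (by omega) (by omega), ?_⟩
        show ({{iB p kc, iB p kd}, {iB p ka, iB p kb}} : Finset (Finset ℕ)) = _
        rw [Finset.pair_comm]
    · rcases Nat.lt_or_ge ka kd with h' | h'
      · refine ⟨Sum.inr (Sum.inl (ka,kb,kd,kc)), hmem _ _ _ _ h1 h2 h4 h3 (by omega) (by omega)
          (by omega) (by omega), ?_⟩
        show ({{iB p ka, iB p kb}, {iB p kd, iB p kc}} : Finset (Finset ℕ)) = _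
        rw [Finset.pair_comm (iB p kd) (iB p kc)]
      · refine ⟨Sum.inr (Sum.inl (kd,kc,ka,kb)), hmem _ _ _ _ h4 h3 h1 h2 (by omega) (by omega)
          (by omega) (by omega), ?_⟩
        show ({{iB p kd, iB p kc}, {iB p ka, iB p kb}} : Finset (Finset ℕ)) = _
        rw [Finset.pair_comm (iB p kd) (iB p kc), Finset.pair_comm]
  · rcases Nat.lt_or_ge kc kd with hcd' | hcd'
    · rcases Nat.lt_or_ge kb kc with h' | h'
      · refine ⟨Sum.inr (Sum.inl (kb,ka,kc,kd)), hmem _ _ _ _ h2 h1 h3 h4 (by omega) (by omega)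
          (by omega) (by omega), ?_⟩
        show ({{iB p kb, iB p ka}, {iB p kc, iB p kd}} : Finset (Finset ℕ)) = _
        rw [Finset.pair_comm (iB p kb) (iB p ka)]
      · refine ⟨Sum.inr (Sum.inl (kc,kd,kb,ka)), hmem _ _ _ _ h3 h4 h2 h1 (by omega) (by omega)
          (by omega) (by omega), ?_⟩
        show ({{iB p kc, iB p kd}, {iB p kb, iB p ka}} : Finset (Finset ℕ)) = _
        rw [Finset.pair_comm (iB p kb) (iB p ka), Finset.pair_comm]
    · rcases Nat.lt_or_ge kb kd with h' | h'
      · refine ⟨Sum.inr (Sum.inl (kb,ka,kd,kc)), hmem _ _ _ _ h2 h1 h4 h3 (by omega) (by omega)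
          (by omega) (by omega), ?_⟩
        show ({{iB p kb, iB p ka}, {iB p kd, iB p kc}} : Finset (Finset ℕ)) = _
        rw [Finset.pair_comm (iB p kb) (iB p ka), Finset.pair_comm (iB p kd) (iB p kc)]
      · refine ⟨Sum.inr (Sum.inl (kd,kc,kb,ka)), hmem _ _ _ _ h4 h3 h2 h1 (by omega) (by omega)
          (by omega) (by omega), ?_⟩
        show ({{iB p kd, iB p kc}, {iB p kb, iB p ka}} : Finset (Finset ℕ)) = _
        rw [Finset.pair_comm (iB p kb) (iB p ka), Finset.pair_comm (iB p kd) (iB p kc),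
          Finset.pair_comm]

lemma surjAB {p ka la kc lc : ℕ} (h1 : ka ≤ p) (h2 : la < p) (h3 : kc ≤ p) (h4 : lc < p)
    (hkk : ka ≠ kc) (hs : ka + la = kc + lc) :
    ∃ x ∈ D p, F p x = ({{iA p ka, iB p la}, {iA p kc, iB p lc}} : Finset (Finset ℕ)) := by
  have hmem : ∀ w x y z : ℕ, w ≤ p → x < p → y ≤ p → z < p → w < y →
      w + x = y + z → Sum.inr (Sum.inr (w,x,y,z)) ∈ D p := by
    intro w x y z b1 b2 b3 b4 o1 ss
    rw [D, Finset.inr_mem_disjSum, Finset.inr_mem_disjSum]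
    simp only [TAB, mem_filter, mem_product, mem_range]
    omega
  rcases Nat.lt_or_ge ka kc with h' | h'
  · exact ⟨Sum.inr (Sum.inr (ka,la,kc,lc)), hmem _ _ _ _ h1 h2 h3 h4 h' hs, rfl⟩
  · refine ⟨Sum.inr (Sum.inr (kc,lc,ka,la)), hmem _ _ _ _ h3 h4 h1 h2 (by omega) (by omega), ?_⟩
    show ({{iA p kc, iB p lc}, {iA p ka, iB p la}} : Finset (Finset ℕ)) = _
    rw [Finset.pair_comm]

lemma F_surj {p : ℕ} (hp : 1 ≤ p) : ∀ u ∈ L p, ∃ x ∈ D p, F p x = u := by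
  intro u hu
  rw [L, Finset.mem_filter] at hu
  obtain ⟨hpow, e, he, f, hf, hef, hdisj, hsum⟩ := hu
  rw [Finset.mem_powersetCard] at hpow
  obtain ⟨hsub, hcard2⟩ := hpow
  have heP := hsub he
  have hfP := hsub hf
  rw [Finset.mem_powersetCard] at heP hfP
  obtain ⟨heI, he2⟩ := heP
  obtain ⟨hfI, hf2⟩ := hfP
  obtain ⟨a, b, hab, rfl⟩ := Finset.card_eq_two.1 he2
  obtain ⟨c, d, hcd, rfl⟩ := Finset.card_eq_two.1 hf2
  have hu2 : u = {({a,b} : Finset ℕ), {c,d}} := by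
    refine (Finset.eq_of_subset_of_card_le ?_ ?_).symm
    · intro t ht
      simp only [Finset.mem_insert, Finset.mem_singleton] at ht
      rcases ht with rfl|rfl <;> assumption
    · rw [hcard2, Finset.card_pair hef]
  rw [hu2]
  have hanotin : a ∉ ({c,d} : Finset ℕ) :=
    Finset.disjoint_left.1 hdisj (Finset.mem_insert_self a {b})
  have hbnotin : b ∉ ({c,d} : Finset ℕ) :=
    Finset.disjoint_left.1 hdisj (by simp)
  have hac : a ≠ c := fun h => hanotin (by simp [h])
  have had : a ≠ d := fun h => hanotin (by simp [h])
  have hbc : b ≠ c := fun h => hbnotin (by simp [h])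
  have hbd : b ≠ d := fun h => hbnotin (by simp [h])
  rw [Finset.sum_pair hab, Finset.sum_pair hcd] at hsum
  rcases cover (heI (by simp : a ∈ ({a,b} : Finset ℕ))) with ⟨ka,hka,rfl⟩ | ⟨la,hla,rfl⟩ <;>
    rcases cover (heI (by simp : b ∈ _)) with ⟨kb,hkb,rfl⟩ | ⟨lb,hlb,rfl⟩ <;>
    rcases cover (hfI (by simp : c ∈ _)) with ⟨kc,hkc,rfl⟩ | ⟨lc,hlc,rfl⟩ <;>
    rcases cover (hfI (by simp : d ∈ _)) with ⟨kd,hkd,rfl⟩ | ⟨ld,hld,rfl⟩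
  · rw [vA hka, vA hkb, vA hkc, vA hkd] at hsum
    simp only [Prod.mk_add_mk, Prod.mk.injEq] at hsum
    obtain ⟨hf1, hs2⟩ := hsum
    have kab : ka ≠ kb := fun h => hab (by rw [h])
    have kcd : kc ≠ kd := fun h => hcd (by rw [h])
    have kac : ka ≠ kc := fun h => hac (by rw [h])
    have kad : ka ≠ kd := fun h => had (by rw [h])
    have kbc : kb ≠ kc := fun h => hbc (by rw [h])
    have kbd : kb ≠ kd := fun h => hbd (by rw [h])
    exact surjAA hka hkb hkc hkd kab kcd kac kad kbc kbd (by omega)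
  · rw [vA hka, vA hkb, vA hkc, vB hld] at hsum
    simp only [Prod.mk_add_mk, Prod.mk.injEq] at hsum
    obtain ⟨hf1, hs2⟩ := hsum
    exfalso; omega
  · rw [vA hka, vA hkb, vB hlc, vA hkd] at hsum
    simp only [Prod.mk_add_mk, Prod.mk.injEq] at hsum
    obtain ⟨hf1, hs2⟩ := hsum
    exfalso; omega
  · rw [vA hka, vA hkb, vB hlc, vB hld] at hsum
    simp only [Prod.mk_add_mk, Prod.mk.injEq] at hsum
    obtain ⟨hf1, hs2⟩ := hsum
    exfalso; omega
  · rw [vA hka, vB hlb, vA hkc, vA hkd] at hsum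
    simp only [Prod.mk_add_mk, Prod.mk.injEq] at hsum
    obtain ⟨hf1, hs2⟩ := hsum
    exfalso; omega
  · rw [vA hka, vB hlb, vA hkc, vB hld] at hsum
    simp only [Prod.mk_add_mk, Prod.mk.injEq] at hsum
    obtain ⟨hf1, hs2⟩ := hsum
    have kac : ka ≠ kc := fun h => hac (by rw [h])
    exact surjAB hka hlb hkc hld kac (by omega)
  · rw [vA hka, vB hlb, vB hlc, vA hkd] at hsum
    simp only [Prod.mk_add_mk, Prod.mk.injEq] at hsum
    obtain ⟨hf1, hs2⟩ := hsum
    have kad : ka ≠ kd := fun h => had (by rw [h])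
    rw [Finset.pair_comm (iB p lc) (iA p kd)]
    exact surjAB hka hlb hkd hlc kad (by omega)
  · rw [vA hka, vB hlb, vB hlc, vB hld] at hsum
    simp only [Prod.mk_add_mk, Prod.mk.injEq] at hsum
    obtain ⟨hf1, hs2⟩ := hsum
    exfalso; omega
  · rw [vB hla, vA hkb, vA hkc, vA hkd] at hsum
    simp only [Prod.mk_add_mk, Prod.mk.injEq] at hsum
    obtain ⟨hf1, hs2⟩ := hsum
    exfalso; omega
  · rw [vB hla, vA hkb, vA hkc, vB hld] at hsum
    simp only [Prod.mk_add_mk, Prod.mk.injEq] at hsum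
    obtain ⟨hf1, hs2⟩ := hsum
    have kbc : kb ≠ kc := fun h => hbc (by rw [h])
    rw [Finset.pair_comm (iB p la) (iA p kb)]
    exact surjAB hkb hla hkc hld kbc (by omega)
  · rw [vB hla, vA hkb, vB hlc, vA hkd] at hsum
    simp only [Prod.mk_add_mk, Prod.mk.injEq] at hsum
    obtain ⟨hf1, hs2⟩ := hsum
    have kbd : kb ≠ kd := fun h => hbd (by rw [h])
    rw [Finset.pair_comm (iB p la) (iA p kb), Finset.pair_comm (iB p lc) (iA p kd)]
    exact surjAB hkb hla hkd hlc kbd (by omega)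
  · rw [vB hla, vA hkb, vB hlc, vB hld] at hsum
    simp only [Prod.mk_add_mk, Prod.mk.injEq] at hsum
    obtain ⟨hf1, hs2⟩ := hsum
    exfalso; omega
  · rw [vB hla, vB hlb, vA hkc, vA hkd] at hsum
    simp only [Prod.mk_add_mk, Prod.mk.injEq] at hsum
    obtain ⟨hf1, hs2⟩ := hsum
    exfalso; omega
  · rw [vB hla, vB hlb, vA hkc, vB hld] at hsum
    simp only [Prod.mk_add_mk, Prod.mk.injEq] at hsum
    obtain ⟨hf1, hs2⟩ := hsum
    exfalso; omega
  · rw [vB hla, vB hlb, vB hlc, vA hkd] at hsum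
    simp only [Prod.mk_add_mk, Prod.mk.injEq] at hsum
    obtain ⟨hf1, hs2⟩ := hsum
    exfalso; omega
  · rw [vB hla, vB hlb, vB hlc, vB hld] at hsum
    simp only [Prod.mk_add_mk, Prod.mk.injEq] at hsum
    obtain ⟨hf1, hs2⟩ := hsum
    have kab : la ≠ lb := fun h => hab (by rw [h])
    have kcd : lc ≠ ld := fun h => hcd (by rw [h])
    have kac : la ≠ lc := fun h => hac (by rw [h])
    have kad : la ≠ ld := fun h => had (by rw [h])
    have kbc : lb ≠ lc := fun h => hbc (by rw [h])
    have kbd : lb ≠ ld := fun h => hbd (by rw [h])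
    exact surjBB hp hla hlb hlc hld kab kcd kac kad kbc kbd (by omega)




def T3 (n : ℕ) : Finset (ℕ×ℕ×ℕ) :=
  (range (n+1) ×ˢ range (n+1) ×ˢ range (n+1)).filter
    (fun t => t.1 < t.2.1 ∧ t.2.1 < t.2.2)

def P2 (n : ℕ) : Finset (ℕ×ℕ) :=
  (range (n+1) ×ˢ range (n+1)).filter (fun t => t.1 < t.2)

def U (p : ℕ) : Finset (ℕ×ℕ×ℕ) :=
  (range (p+1) ×ˢ range (p+1) ×ˢ range p).filter
    (fun t => t.1 < t.2.1 ∧ t.2.1 + t.2.2 < t.1 + p)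

lemma P2_card (n : ℕ) : 2 * (P2 n).card = (n+1)*n := by
  induction n with
  | zero => decide
  | succ n ih =>
    have hsplit := card_filter_add_card_filter_not (s := P2 (n+1))
      (p := fun t => t.2 ≤ n)
    have h1 : ((P2 (n+1)).filter (fun t => t.2 ≤ n)).card = (P2 n).card := by
      apply card_nbij' (fun a => a) (fun a => a)
      · intro a ha; simp only [P2, mem_coe, mem_filter, mem_product, mem_range] at *; omega
      · intro a ha; simp only [P2, mem_coe, mem_filter, mem_product, mem_range] at *; omega
      · intro _ _; rfl
      · intro _ _; rfl
    have h2 : ((P2 (n+1)).filter (fun t => ¬ t.2 ≤ n)).card = (range (n+1)).card := by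
      apply card_nbij' (fun t => t.1) (fun x => (x, n+1))
      · intro a ha; simp only [P2, mem_coe, mem_filter, mem_product, mem_range] at *; omega
      · intro a ha; simp only [P2, mem_coe, mem_filter, mem_product, mem_range] at *
        omega
      · intro a ha; simp only [P2, mem_coe, mem_filter, mem_product, mem_range] at ha
        obtain ⟨⟨_, _⟩, _⟩ := ha
        ext <;> simp <;> omega
      · intro _ _; rfl
    rw [card_range] at h2
    have key : (n+1)*n + 2*(n+1) = (n+1+1)*(n+1) := by ring
    linarith [hsplit, h1, h2, ih, key]

lemma T3_card (n : ℕ) : 6 * (T3 n).card = (n+1)*n*(n-1) := by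
  induction n with
  | zero => decide
  | succ n ih =>
    have hsplit := card_filter_add_card_filter_not (s := T3 (n+1))
      (p := fun t => t.2.2 ≤ n)
    have h1 : ((T3 (n+1)).filter (fun t => t.2.2 ≤ n)).card = (T3 n).card := by
      apply card_nbij' (fun a => a) (fun a => a)
      · intro a ha; simp only [T3, mem_coe, mem_filter, mem_product, mem_range] at *; omega
      · intro a ha; simp only [T3, mem_coe, mem_filter, mem_product, mem_range] at *; omega
      · intro _ _; rfl
      · intro _ _; rfl
    have h2 : ((T3 (n+1)).filter (fun t => ¬ t.2.2 ≤ n)).card = (P2 n).card := by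
      apply card_nbij' (fun t => (t.1, t.2.1)) (fun x => (x.1, x.2, n+1))
      · intro a ha; simp only [T3, P2, mem_coe, mem_filter, mem_product, mem_range] at *; omega
      · intro a ha; simp only [T3, P2, mem_coe, mem_filter, mem_product, mem_range] at *
        omega
      · intro a ha; simp only [T3, mem_coe, mem_filter, mem_product, mem_range] at ha
        ext <;> simp <;> omega
      · intro _ _; rfl
    have hrec : (T3 (n+1)).card = (T3 n).card + (P2 n).card := by omega
    cases n with
    | zero => rw [hrec]; revert ih; decide
    | succ m =>
      have hp2 := P2_card (m+1)
      rw [hrec]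
      simp only [Nat.succ_sub_one] at ih ⊢
      have key : (m+1+1)*(m+1)*m + 3*((m+1+1)*(m+1)) = (m+1+1+1)*(m+1+1)*(m+1) := by ring
      linarith [ih, hp2, key]

lemma U_card (p : ℕ) : 3 * (U p).card = (p-1)*p*(p+1) := by
  induction p with
  | zero => decide
  | succ p ih =>
    have hsplit := card_filter_add_card_filter_not (s := U (p+1))
      (p := fun t => t.1 + 1 < t.2.1)
    have h1 : ((U (p+1)).filter (fun t => t.1 + 1 < t.2.1)).card = (U p).card := by
      apply card_nbij' (fun t => (t.1, t.2.1 - 1, t.2.2)) (fun t => (t.1, t.2.1 + 1, t.2.2))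
      · intro a ha; simp only [U, mem_coe, mem_filter, mem_product, mem_range] at *
        omega
      · intro a ha; simp only [U, mem_coe, mem_filter, mem_product, mem_range] at *
        omega
      · intro a ha; simp only [U, mem_coe, mem_filter, mem_product, mem_range] at ha
        ext <;> simp <;> omega
      · intro a ha; simp only [U, mem_coe, mem_filter, mem_product, mem_range] at ha
        ext <;> simp <;> omega
    have h2 : ((U (p+1)).filter (fun t => ¬ t.1 + 1 < t.2.1)).card
        = ((range (p+1)) ×ˢ (range p)).card := by
      apply card_nbij' (fun t => (t.1, t.2.2)) (fun x => (x.1, x.1+1, x.2))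
      · intro a ha; simp only [U, mem_coe, mem_filter, mem_product, mem_range] at *; omega
      · intro a ha; simp only [U, mem_coe, mem_filter, mem_product, mem_range] at *
        omega
      · intro a ha; simp only [U, mem_coe, mem_filter, mem_product, mem_range] at ha
        ext <;> simp <;> omega
      · intro _ _; rfl
    rw [card_product, card_range, card_range] at h2
    have hrec : (U (p+1)).card = (U p).card + (p+1)*p := by omega
    rw [hrec]
    cases p with
    | zero => revert hrec; decide
    | succ m =>
      simp only [Nat.succ_sub_one] at ih ⊢
      have key : m*(m+1)*(m+1+1) + 3*((m+1+1)*(m+1)) = (m+1)*(m+1+1)*(m+1+1+1) := by ring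
      linarith [ih, key]






lemma TAB_card (p : ℕ) : (TAB p).card = (U p).card := by
  apply card_nbij' (fun q => (q.1, q.2.2.1, q.2.2.2)) (fun t => (t.1, t.2.1 + t.2.2 - t.1, t.2.1, t.2.2))
  · intro a ha; simp only [TAB, U, mem_coe, mem_filter, mem_product, mem_range] at *; omega
  · intro a ha; simp only [TAB, U, mem_coe, mem_filter, mem_product, mem_range] at *; omega
  · intro a ha; simp only [TAB, mem_coe, mem_filter, mem_product, mem_range] at ha
    ext <;> simp <;> omega
  · intro a ha; simp only [U, mem_coe, mem_filter, mem_product, mem_range] at ha; rfl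

lemma TAA_card_le (p : ℕ) :
    (TAA p).card = ((T3 (p-1)).filter (fun t => 2*t.2.1 ≤ t.1 + t.2.2)).card := by
  apply card_nbij' (fun q => (q.1, q.2.2.1, q.2.1 - 1))
    (fun t => (t.1, t.2.2 + 1, t.2.1, t.1 + t.2.2 + 1 - t.2.1))
  · intro a ha; simp only [TAA, T3, mem_coe, mem_filter, mem_product, mem_range] at *; omega
  · intro a ha; simp only [TAA, T3, mem_coe, mem_filter, mem_product, mem_range] at *; omega
  · intro a ha; simp only [TAA, mem_coe, mem_filter, mem_product, mem_range] at ha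
    ext <;> simp <;> omega
  · intro a ha; simp only [T3, mem_coe, mem_filter, mem_product, mem_range] at ha
    ext <;> simp <;> omega

lemma TAA_card_gt (p : ℕ) :
    (TAA (p-1)).card = ((T3 (p-1)).filter (fun t => ¬ 2*t.2.1 ≤ t.1 + t.2.2)).card := by
  apply card_nbij' (fun q => (p-1 - q.2.1, p-1 - q.2.2.1, p-1 - q.1))
    (fun t => (p-1 - t.2.2, p-1 - t.1, p-1 - t.2.1, p-1 + t.2.1 - t.1 - t.2.2))
  · intro a ha; simp only [TAA, T3, mem_coe, mem_filter, mem_product, mem_range] at *; omega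
  · intro a ha; simp only [TAA, T3, mem_coe, mem_filter, mem_product, mem_range] at *; omega
  · intro a ha; simp only [TAA, mem_coe, mem_filter, mem_product, mem_range] at ha
    ext <;> simp <;> omega
  · intro a ha; simp only [T3, mem_coe, mem_filter, mem_product, mem_range] at ha
    ext <;> simp <;> omega

lemma TAA_TBB_card (p : ℕ) :
    (TAA p).card + (TAA (p-1)).card = (T3 (p-1)).card := by
  rw [TAA_card_le, TAA_card_gt]
  exact card_filter_add_card_filter_not _

/-- Final arithmetic assembly. -/
lemma assemble (p a b c : ℕ) (hp : 1 ≤ p)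
    (hab : a + b = (T3 (p-1)).card) (hc : c = (U p).card) :
    a + b + c = p^2 * (p-1) / 2 := by
  obtain ⟨q, rfl⟩ : ∃ q, p = q + 1 := ⟨p - 1, by omega⟩
  have h1 : 6 * (a + b) = (q+1) * q * (q-1) := by
    rw [hab]; simpa using T3_card q
  have h2 : 3 * c = q * (q+1) * (q+1+1) := by
    rw [hc]; simpa using U_card (q+1)
  have key : (q+1) * q * (q-1) + 2 * (q * (q+1) * (q+1+1)) = 3 * (q * (q+1)^2) := by
    cases q with
    | zero => decide
    | succ m => simp only [Nat.succ_sub_one]; ring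
  have h3 : 2 * (a + b + c) = q * (q+1)^2 := by omega
  have : (q+1)^2 * (q+1-1) = q * (q+1)^2 := by simp only [Nat.add_sub_cancel]; ring
  omega





lemma L_card (p : ℕ) (hp : 1 ≤ p) :
    (L p).card = (TAA p).card + ((TAA (p-1)).card + (TAB p).card) := by
  have h := Finset.card_bij (fun (a : Pairty) (_ : a ∈ D p) => F p a) (F_maps hp)
    (F_inj hp) ?_
  · rw [← h, D, Finset.card_disjSum, Finset.card_disjSum]
  · intro b hb
    obtain ⟨x, hx, hfx⟩ := F_surj hp b hb
    exact ⟨x, hx, hfx⟩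

end Stmt9

/-- The number of pairings (unordered pairs of disjoint 2-element subsets of the
generators satisfying the center-of-mass condition `v_a + v_b = v_c + v_d`) of the
`(2, 2p+1)` torus knot equals `p²(p-1)/2`. -/
theorem stmt_9 (p : ℕ) (hp : 1 ≤ p) :
    (((((Finset.Icc 1 (2 * p + 1)).powersetCard 2).powersetCard 2)).filter
      (fun u => ∃ e ∈ u, ∃ f ∈ u, e ≠ f ∧ Disjoint e f ∧
        ∑ i ∈ e, torusVec p i = ∑ i ∈ f, torusVec p i)).card
    = p ^ 2 * (p - 1) / 2 := by
  have h0 : (((((Finset.Icc 1 (2 * p + 1)).powersetCard 2).powersetCard 2)).filter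
      (fun u => ∃ e ∈ u, ∃ f ∈ u, e ≠ f ∧ Disjoint e f ∧
        ∑ i ∈ e, torusVec p i = ∑ i ∈ f, torusVec p i)).card = (Stmt9.L p).card := rfl
  rw [h0, Stmt9.L_card p hp, ← Nat.add_assoc]
  exact Stmt9.assemble p _ _ _ hp (Stmt9.TAA_TBB_card p) (Stmt9.TAB_card p)
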